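/- There exists L₀ such that for all L ≥ L₀ and all integers L ≤ k₁ < k₂, P(∃ i ∈ [k₁, k₂] such that ℰ(i,ℓ,L) occurs for some ℓ ≤ 10 log i) ≤ (k₂ − k₁) · exp(−L² k₁^{2α} / (4 d (10 log k₂)⁴ ζ(2)²)) + k₁^{−3}. -/

import Mathlib

open scoped ENNReal NNReal

/-- Index type for the jointly independent random choices: `inl i` indexes the
uniform parent choice of vertex `i`, `inr (i, k)` indexes the `k`-th coordinate
of the Gaussian displacement `D i`. -/
abbrev Idx (d : ℕ) := ℕ ⊕ (ℕ × Fin d)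

/-- Value type of each random choice. -/
def IdxType (d : ℕ) : Idx d → Type
  | .inl _ => ℕ
  | .inr _ => ℝ

instance instIdxType (d : ℕ) (x : Idx d) : MeasurableSpace (IdxType d x) := by
  cases x with
  | inl _ => exact (inferInstance : MeasurableSpace ℕ)
  | inr _ => exact (inferInstance : MeasurableSpace ℝ)

/-- The random cluster model in `ℝ^d` with standard deviations `σ_i = i^{-α}`:
`X 1 = 0`, and for `i ≥ 2`, `X i = X (pa i) + D i` where the parent `pa i` is
uniform on `{1, …, i-1}` and `D i` has `d` independent centered Gaussian
coordinates of variance `i^{-2α}`, all choices jointly independent.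
`lvl i` is the level of vertex `i` in the recursive tree. -/
structure Model (d : ℕ) (α : ℝ) where
  Ω : Type
  [mΩ : MeasurableSpace Ω]
  μ : MeasureTheory.Measure Ω
  prob : MeasureTheory.IsProbabilityMeasure μ
  pa : ℕ → Ω → ℕ
  D : ℕ → Ω → EuclideanSpace ℝ (Fin d)
  X : ℕ → Ω → EuclideanSpace ℝ (Fin d)
  lvl : ℕ → Ω → ℕ
  meas_pa : ∀ i, Measurable (pa i)
  meas_D : ∀ i, Measurable (D i)
  pa_mem : ∀ i, 2 ≤ i → ∀ ω, 1 ≤ pa i ω ∧ pa i ω < i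
  pa_unif : ∀ i, 2 ≤ i → ∀ j, 1 ≤ j → j < i → μ {ω | pa i ω = j} = (1 : ℝ≥0∞) / (i - 1 : ℕ)
  D_gauss : ∀ i, 2 ≤ i → ∀ k : Fin d,
    MeasureTheory.Measure.map (fun ω => D i ω k) μ
      = ProbabilityTheory.gaussianReal 0 ((i : ℝ≥0) ^ (-(2 * α)))
  indep : ProbabilityTheory.iIndepFun (m := instIdxType d)
    (fun x : Idx d => match x with
      | .inl i => pa i
      | .inr (i, k) => fun ω => D i ω k) μ
  X_one : ∀ ω, X 1 ω = 0
  X_rec : ∀ i, 2 ≤ i → ∀ ω, X i ω = X (pa i ω) ω + D i ω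
  lvl_one : ∀ ω, lvl 1 ω = 0
  lvl_rec : ∀ i, 2 ≤ i → ∀ ω, lvl i ω = lvl (pa i ω) ω + 1

open MeasureTheory ProbabilityTheory Real Filter Bornology

/-- `ζ(2) = π²/6`. -/
noncomputable def zeta2 : ℝ := Real.pi ^ 2 / 6

section Helpers
open Set

lemma integral_Ioi_mul_exp_neg_mul_sq {b : ℝ} (hb : 0 < b) (s : ℝ) :
    ∫ x in Set.Ioi s, x * Real.exp (-b * x ^ 2) = Real.exp (-b * s ^ 2) / (2 * b) := by
  have A : ∀ x : ℝ, HasDerivAt (fun x => -(2 * b)⁻¹ * Real.exp (-b * x ^ 2))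
      (x * Real.exp (-b * x ^ 2)) x := by
    intro x
    convert ((hasDerivAt_pow 2 x).const_mul (-b)).exp.const_mul (-(2 * b)⁻¹) using 1
    · rfl
    · rfl
    field_simp
    ring
  have B : Tendsto (fun y : ℝ ↦ -(2 * b)⁻¹ * Real.exp (-b * y ^ 2)) atTop (nhds (-(2 * b)⁻¹ * 0)) := by
    refine Tendsto.const_mul _ ?_
    refine Real.tendsto_exp_atBot.comp ?_
    exact (tendsto_pow_atTop two_ne_zero).const_mul_atTop_of_neg (neg_lt_zero.2 hb)
  have := integral_Ioi_of_hasDerivAt_of_tendsto' (a := s)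
    (fun x _ => A x) (integrable_mul_exp_neg_mul_sq hb).integrableOn B
  rw [this]
  field_simp
  ring

lemma gaussian_onesided (v : ℝ≥0) (hv : v ≠ 0) {s : ℝ} (hs : Real.sqrt v ≤ s) :
    gaussianReal 0 v (Set.Ici s) ≤ ENNReal.ofReal (Real.exp (-s ^ 2 / (2 * v))) := by
  have hv0 : (0:ℝ) < v := by positivity
  have hsv : (0:ℝ) < Real.sqrt v := Real.sqrt_pos.2 hv0
  have hs0 : 0 < s := lt_of_lt_of_le hsv hs
  have hb : (0:ℝ) < (2 * (v:ℝ))⁻¹ := by positivity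
  rw [gaussianReal_apply_eq_integral 0 hv]
  apply ENNReal.ofReal_le_ofReal
  have hpdf : ∀ x : ℝ, gaussianPDFReal 0 v x
      = (Real.sqrt (2 * π * v))⁻¹ * Real.exp (-(2 * (v:ℝ))⁻¹ * x ^ 2) := by
    intro x
    rw [gaussianPDFReal]
    ring_nf
  -- integrability of x * pdf
  have hint : Integrable (fun x : ℝ => (Real.sqrt (2 * π * v))⁻¹ * (s⁻¹ * (x * Real.exp (-(2 * (v:ℝ))⁻¹ * x ^ 2)))) :=
    ((integrable_mul_exp_neg_mul_sq hb).const_mul _).const_mul _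
  have step1 : ∫ x in Set.Ici s, gaussianPDFReal 0 v x
      ≤ ∫ x in Set.Ici s, (Real.sqrt (2 * π * v))⁻¹ * (s⁻¹ * (x * Real.exp (-(2 * (v:ℝ))⁻¹ * x ^ 2))) := by
    apply setIntegral_mono_on ((integrable_gaussianPDFReal 0 v).integrableOn) hint.integrableOn
      measurableSet_Ici
    intro x hx
    rw [hpdf]
    have hx1 : (1:ℝ) ≤ s⁻¹ * x := by
      have : s ≤ x := hx
      rw [inv_mul_eq_div, le_div_iff₀ hs0]
      linarith
    have hpos : 0 < Real.exp (-(2 * (v:ℝ))⁻¹ * x ^ 2) := Real.exp_pos _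
    have : Real.exp (-(2 * (v:ℝ))⁻¹ * x ^ 2) ≤ s⁻¹ * (x * Real.exp (-(2 * (v:ℝ))⁻¹ * x ^ 2)) := by
      calc Real.exp (-(2 * (v:ℝ))⁻¹ * x ^ 2) = 1 * Real.exp (-(2 * (v:ℝ))⁻¹ * x ^ 2) := by ring
        _ ≤ (s⁻¹ * x) * Real.exp (-(2 * (v:ℝ))⁻¹ * x ^ 2) := by
            apply mul_le_mul_of_nonneg_right hx1 hpos.le
        _ = s⁻¹ * (x * Real.exp (-(2 * (v:ℝ))⁻¹ * x ^ 2)) := by ring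
    have h2 : (0:ℝ) ≤ (Real.sqrt (2 * π * v))⁻¹ := by positivity
    exact mul_le_mul_of_nonneg_left this h2
  have step2 : ∫ x in Set.Ici s, (Real.sqrt (2 * π * v))⁻¹ * (s⁻¹ * (x * Real.exp (-(2 * (v:ℝ))⁻¹ * x ^ 2)))
      = (Real.sqrt (2 * π * v))⁻¹ * s⁻¹ * (Real.exp (-(2 * (v:ℝ))⁻¹ * s ^ 2) / (2 * (2 * (v:ℝ))⁻¹)) := by
    rw [integral_Ici_eq_integral_Ioi, integral_const_mul, integral_const_mul,
      integral_Ioi_mul_exp_neg_mul_sq hb]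
    ring
  refine step1.trans (step2.le.trans ?_)
  have hexp : -(2 * (v:ℝ))⁻¹ * s ^ 2 = -s ^ 2 / (2 * v) := by ring
  rw [hexp]
  have hco : (Real.sqrt (2 * π * v))⁻¹ * s⁻¹ * (Real.exp (-s ^ 2 / (2 * v)) / (2 * (2 * (v:ℝ))⁻¹))
      = ((v:ℝ) / (s * Real.sqrt (2 * π * v))) * Real.exp (-s ^ 2 / (2 * v)) := by
    field_simp
  rw [hco]
  have hle1 : (v:ℝ) / (s * Real.sqrt (2 * π * v)) ≤ 1 := by
    rw [div_le_one (by positivity)]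
    calc (v:ℝ) = Real.sqrt v * Real.sqrt v := (Real.mul_self_sqrt hv0.le).symm
      _ ≤ s * Real.sqrt (2 * π * v) := by
          apply mul_le_mul hs _ (Real.sqrt_nonneg _) hs0.le
          apply Real.sqrt_le_sqrt
          nlinarith [Real.pi_gt_three, hv0]
  nlinarith [Real.exp_pos (-s ^ 2 / (2 * (v:ℝ))), hle1]

lemma gaussian_abs_tail (v : ℝ≥0) (hv : v ≠ 0) {s : ℝ} (hs : 0 ≤ s) :
    gaussianReal 0 v {x : ℝ | s ≤ |x|} ≤ ENNReal.ofReal (2 * Real.exp (-s ^ 2 / (2 * v))) := by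
  have hv0 : (0:ℝ) < v := by positivity
  by_cases hcase : Real.sqrt v ≤ s
  · -- split into two tails
    have hsub : {x : ℝ | s ≤ |x|} ⊆ Set.Iic (-s) ∪ Set.Ici s := by
      intro x hx
      simp only [Set.mem_setOf_eq] at hx
      rcases abs_cases x with ⟨h1, _⟩ | ⟨h1, _⟩
      · right; exact Set.mem_Ici.2 (h1 ▸ hx)
      · left; exact Set.mem_Iic.2 (by linarith [hx, h1])
    have hneg : gaussianReal 0 v (Set.Iic (-s)) ≤ ENNReal.ofReal (Real.exp (-s ^ 2 / (2 * v))) := by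
      have hpre : Set.Iic (-s) = (fun x : ℝ => (-1) * x) ⁻¹' (Set.Ici s) := by
        ext x; simp only [Set.mem_Iic, Set.mem_preimage, Set.mem_Ici, neg_one_mul]
        constructor <;> intro h <;> linarith
      have hmap : (gaussianReal 0 v).map (fun x : ℝ => (-1) * x) = gaussianReal 0 v := by
        have := gaussianReal_map_const_mul (μ := 0) (v := v) (-1)
        simp only [mul_zero] at this
        convert this using 3
        · ext : 1; norm_num
      rw [hpre, ← Measure.map_apply (measurable_const_mul (-1)) measurableSet_Ici, hmap]
      exact gaussian_onesided v hv hcase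
    calc gaussianReal 0 v {x : ℝ | s ≤ |x|} ≤ gaussianReal 0 v (Set.Iic (-s) ∪ Set.Ici s) :=
          measure_mono hsub
      _ ≤ gaussianReal 0 v (Set.Iic (-s)) + gaussianReal 0 v (Set.Ici s) := measure_union_le _ _
      _ ≤ ENNReal.ofReal (Real.exp (-s ^ 2 / (2 * v))) + ENNReal.ofReal (Real.exp (-s ^ 2 / (2 * v))) :=
          add_le_add hneg (gaussian_onesided v hv hcase)
      _ = ENNReal.ofReal (2 * Real.exp (-s ^ 2 / (2 * v))) := by
          rw [← ENNReal.ofReal_add (Real.exp_pos _).le (Real.exp_pos _).le]; ring_nf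
  · -- trivial case: 2 * exp(...) ≥ 1
    push_neg at hcase
    have hs2 : s ^ 2 < v := by
      have := Real.sq_sqrt hv0.le
      nlinarith [Real.sqrt_nonneg (v:ℝ)]
    have h1 : (1:ℝ) ≤ 2 * Real.exp (-s ^ 2 / (2 * v)) := by
      have harg : -(2:ℝ)⁻¹ ≤ -s ^ 2 / (2 * v) := by
        rw [neg_div, neg_le_neg_iff, div_le_iff₀ (by positivity)]
        nlinarith
      have := Real.exp_le_exp.2 harg
      have hhalf : (1:ℝ) / 2 ≤ Real.exp (-(2:ℝ)⁻¹) := by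
        have h4 : Real.exp ((2:ℝ)⁻¹) ^ 2 ≤ 2 ^ 2 := by
          rw [← Real.exp_nat_mul]
          norm_num
          calc Real.exp 1 ≤ 2.7182818286 := Real.exp_one_lt_d9.le
            _ ≤ 4 := by norm_num
        have h5 : Real.exp ((2:ℝ)⁻¹) ≤ 2 := by
          nlinarith [Real.exp_pos ((2:ℝ)⁻¹)]
        rw [Real.exp_neg]
        rw [div_le_iff₀ (by norm_num : (0:ℝ) < 2), inv_mul_eq_div, le_div_iff₀ (Real.exp_pos _)]
        linarith
      linarith
    calc gaussianReal 0 v {x : ℝ | s ≤ |x|} ≤ 1 := prob_le_one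
      _ ≤ ENNReal.ofReal (2 * Real.exp (-s ^ 2 / (2 * v))) := ENNReal.one_le_ofReal.2 h1

lemma exists_L0 {α : ℝ} (hα : 0 < α) (C B : ℝ) (hC : 0 < C) (hB : 1 ≤ B) :
    ∃ L₀ : ℝ, 3 ≤ L₀ ∧ B ≤ L₀ ∧ ∀ x : ℝ, L₀ ≤ x → C * Real.log (x + B) ^ 4 ≤ x ^ (2 * α) := by
  set ε := α / 4 with hε
  have hε0 : 0 < ε := by positivity
  set K := C * 2 ^ α / ε ^ 4 with hK
  have hK0 : 0 < K := by positivity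
  refine ⟨max 3 (max B ((K + 1) ^ (α⁻¹))), le_max_left _ _, (le_max_left B _).trans (le_max_right _ _), ?_⟩
  intro x hx
  have hx3 : (3:ℝ) ≤ x := le_trans (le_max_left _ _) hx
  have hxB : B ≤ x := le_trans ((le_max_left B _).trans (le_max_right _ _)) hx
  have hxK : (K + 1) ^ (α⁻¹) ≤ x := le_trans ((le_max_right B _).trans (le_max_right _ _)) hx
  have hx0 : (0:ℝ) < x := by linarith
  have hxα : K ≤ x ^ α := by
    have h1 : ((K + 1) ^ (α⁻¹)) ^ α ≤ x ^ α :=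
      Real.rpow_le_rpow (Real.rpow_nonneg (by linarith) _) hxK hα.le
    have h2 : ((K + 1) ^ (α⁻¹)) ^ α = K + 1 := by
      rw [← Real.rpow_mul (by linarith), inv_mul_cancel₀ hα.ne', Real.rpow_one]
    rw [h2] at h1
    linarith
  -- bound log
  have hlog0 : 0 ≤ Real.log (x + B) := Real.log_nonneg (by linarith)
  have hlog : Real.log (x + B) ≤ 2 ^ ε * x ^ ε / ε := by
    have h1 : Real.log (x + B) ≤ (x + B) ^ ε / ε := Real.log_le_rpow_div (by linarith) hε0
    have h2 : (x + B) ^ ε ≤ (2 * x) ^ ε := Real.rpow_le_rpow (by linarith) (by linarith) hε0.le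
    rw [Real.mul_rpow (by norm_num) hx0.le] at h2
    calc Real.log (x + B) ≤ (x + B) ^ ε / ε := h1
      _ ≤ 2 ^ ε * x ^ ε / ε := by gcongr
  have hlog4 : Real.log (x + B) ^ 4 ≤ (2 ^ ε * x ^ ε / ε) ^ 4 := by
    gcongr
  have hxεα : ((x:ℝ) ^ ε) ^ (4:ℕ) = x ^ α := by
    rw [← Real.rpow_natCast (x ^ ε), ← Real.rpow_mul hx0.le]
    norm_num [hε]
  have h2ε : ((2:ℝ) ^ ε) ^ (4:ℕ) = 2 ^ α := by
    rw [← Real.rpow_natCast ((2:ℝ) ^ ε), ← Real.rpow_mul (by norm_num)]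
    norm_num [hε]
  have hexpand : (2 ^ ε * x ^ ε / ε) ^ 4 = (2 ^ α / ε ^ 4) * x ^ α := by
    rw [div_pow, mul_pow, hxεα, h2ε]
    ring
  have hxig : x ^ (2 * α) = x ^ α * x ^ α := by
    rw [← Real.rpow_add hx0]; ring_nf
  calc C * Real.log (x + B) ^ 4 ≤ C * ((2 ^ α / ε ^ 4) * x ^ α) := by
        rw [← hexpand]; exact mul_le_mul_of_nonneg_left hlog4 hC.le
    _ = K * x ^ α := by rw [hK]; ring
    _ ≤ x ^ α * x ^ α := by
        apply mul_le_mul_of_nonneg_right hxα (Real.rpow_nonneg hx0.le _)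
    _ = x ^ (2 * α) := hxig.symm

lemma coord_tail {d : ℕ} {α : ℝ} (M : Model d α) (i : ℕ) (hi : 2 ≤ i) (k : Fin d)
    {s : ℝ} (hs : 0 ≤ s) :
    M.μ {ω | s ≤ |M.D i ω k|} ≤
      ENNReal.ofReal (2 * Real.exp (-(s ^ 2 * (i : ℝ) ^ (2 * α)) / 2)) := by
  letI := M.mΩ
  have hmeas : Measurable (fun ω => M.D i ω k) := (EuclideanSpace.proj k).continuous.measurable.comp (M.meas_D i)
  have hset : MeasurableSet {x : ℝ | s ≤ |x|} :=
    measurableSet_le measurable_const (continuous_abs.measurable)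
  have h1 : M.μ {ω | s ≤ |M.D i ω k|}
      = (Measure.map (fun ω => M.D i ω k) M.μ) {x : ℝ | s ≤ |x|} := by
    rw [Measure.map_apply hmeas hset]
    rfl
  rw [h1, M.D_gauss i hi k]
  have hv : ((i : ℝ≥0) ^ (-(2 * α)) : ℝ≥0) ≠ 0 := by
    rw [ne_eq, NNReal.rpow_eq_zero_iff]
    simp only [Nat.cast_eq_zero, not_and]
    intro h; omega
  have := gaussian_abs_tail ((i : ℝ≥0) ^ (-(2 * α))) hv hs
  refine this.trans (le_of_eq ?_)
  congr 1
  have hcoe : (((i : ℝ≥0) ^ (-(2 * α)) : ℝ≥0) : ℝ) = (i : ℝ) ^ (-(2 * α)) := by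
    rw [NNReal.coe_rpow, NNReal.coe_natCast]
  rw [hcoe, Real.rpow_neg (Nat.cast_nonneg i)]
  have hipos : (0:ℝ) < (i : ℝ) ^ (2 * α) := Real.rpow_pos_of_pos (by positivity) _
  field_simp

lemma norm_tail {d : ℕ} {α : ℝ} (hd : 1 ≤ d) (M : Model d α) (i : ℕ) (hi : 2 ≤ i)
    {s : ℝ} (hs : 0 ≤ s) :
    M.μ {ω | s ≤ ‖M.D i ω‖} ≤
      ENNReal.ofReal ((d : ℝ) * (2 * Real.exp (-(s ^ 2 * (i : ℝ) ^ (2 * α)) / (2 * d)))) := by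
  letI := M.mΩ
  have hd0 : (0:ℝ) < d := by exact_mod_cast Nat.pos_of_ne_zero (by omega)
  have hsd : (0:ℝ) ≤ s / Real.sqrt d := by positivity
  have hsub : {ω | s ≤ ‖M.D i ω‖} ⊆ ⋃ k : Fin d, {ω | s / Real.sqrt d ≤ |M.D i ω k|} := by
    intro ω hω
    simp only [Set.mem_setOf_eq] at hω
    by_contra hcon
    simp only [Set.mem_iUnion, Set.mem_setOf_eq, not_exists, not_le] at hcon
    have hsum : ∑ k : Fin d, ‖M.D i ω k‖ ^ 2 < s ^ 2 := by
      have hlt : ∀ k : Fin d, ‖M.D i ω k‖ ^ 2 < s ^ 2 / d := by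
        intro k
        have := hcon k
        have habs : |M.D i ω k| < s / Real.sqrt d := this
        have h2 : ‖M.D i ω k‖ ^ 2 < (s / Real.sqrt d) ^ 2 := by
          rw [Real.norm_eq_abs]
          exact pow_lt_pow_left₀ habs (abs_nonneg _) (by norm_num)
        rwa [div_pow, Real.sq_sqrt hd0.le] at h2
      calc ∑ k : Fin d, ‖M.D i ω k‖ ^ 2 < ∑ _k : Fin d, s ^ 2 / d :=
            Finset.sum_lt_sum_of_nonempty (haveI : Nonempty (Fin d) := ⟨⟨0, by omega⟩⟩; Finset.univ_nonempty) (fun k _ => hlt k)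
        _ = s ^ 2 := by
            rw [Finset.sum_const, Finset.card_univ, Fintype.card_fin, nsmul_eq_mul]
            field_simp
    have hnorm : ‖M.D i ω‖ < s := by
      rw [EuclideanSpace.norm_eq]
      calc Real.sqrt (∑ k : Fin d, ‖M.D i ω k‖ ^ 2) < Real.sqrt (s ^ 2) := by
            apply Real.sqrt_lt_sqrt (by positivity) hsum
        _ = s := Real.sqrt_sq hs
    linarith
  calc M.μ {ω | s ≤ ‖M.D i ω‖} ≤ ∑ k : Fin d, M.μ {ω | s / Real.sqrt d ≤ |M.D i ω k|} :=
        (measure_mono hsub).trans (measure_iUnion_fintype_le _ _)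
    _ ≤ ∑ _k : Fin d, ENNReal.ofReal (2 * Real.exp (-((s / Real.sqrt d) ^ 2 * (i : ℝ) ^ (2 * α)) / 2)) :=
        Finset.sum_le_sum (fun k _ => coord_tail M i hi k hsd)
    _ = ENNReal.ofReal ((d : ℝ) * (2 * Real.exp (-(s ^ 2 * (i : ℝ) ^ (2 * α)) / (2 * d)))) := by
        have harg : -((s / Real.sqrt d) ^ 2 * (i:ℝ) ^ (2 * α)) / 2
            = -(s ^ 2 * (i:ℝ) ^ (2 * α)) / (2 * d) := by
          rw [div_pow, Real.sq_sqrt hd0.le, div_mul_eq_mul_div, neg_div, neg_div, div_div,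
            mul_comm (d:ℝ) 2]
        rw [harg, Finset.sum_const, Finset.card_univ, Fintype.card_fin, nsmul_eq_mul,
          ← ENNReal.ofReal_natCast d, ← ENNReal.ofReal_mul (by positivity)]

lemma zeta2_pos : 0 < zeta2 := by
  rw [zeta2]; positivity

set_option maxHeartbeats 1000000 in
/-- There exists `L₀` such that for all `L ≥ L₀` and all integers `L ≤ k₁ < k₂`,
the probability that some `i ∈ [k₁, k₂]` realizes the event `ℰ(i, ℓ, L)` for some
level `ℓ ≤ 10 log i` is at most
`(k₂ - k₁) exp(-L² k₁^{2α} / (4 d (10 log k₂)⁴ ζ(2)²)) + k₁^{-3}`. -/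
theorem events_E_range_bound (d : ℕ) (hd : 2 ≤ d) (α : ℝ) (hα : 0 < α) (M : Model d α) :
    ∃ L₀ : ℝ, ∀ L : ℝ, L₀ ≤ L → ∀ k₁ k₂ : ℕ, L ≤ (k₁ : ℝ) → k₁ < k₂ →
      M.μ {ω | ∃ i : ℕ, k₁ ≤ i ∧ i ≤ k₂ ∧ ∃ ℓ : ℕ, 1 ≤ ℓ ∧ (ℓ : ℝ) ≤ 10 * Real.log i ∧
            M.lvl i ω = ℓ ∧ L / ((ℓ : ℝ) ^ 2 * zeta2) ≤ ‖M.D i ω‖} ≤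
        ENNReal.ofReal
          (((k₂ : ℝ) - (k₁ : ℝ)) *
              Real.exp (-(L ^ 2 * (k₁ : ℝ) ^ (2 * α)) /
                (4 * d * (10 * Real.log k₂) ^ 4 * zeta2 ^ 2)) +
            (k₁ : ℝ) ^ (-(3 : ℝ))) := by
  letI := M.mΩ
  haveI := M.prob
  have hd0 : (0:ℝ) < d := by exact_mod_cast (by omega : 0 < d)
  have hζ : (0:ℝ) < zeta2 := zeta2_pos
  have hd2 : (2:ℝ) ≤ (d:ℝ) := by exact_mod_cast hd
  have hlog4d : (0:ℝ) < Real.log (4 * d) := Real.log_pos (by linarith)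
  have hC : (0:ℝ) < 4 * d * 10 ^ 4 * zeta2 ^ 2 * Real.log (4 * d) := by positivity
  obtain ⟨L₀, hL₀3, hL₀B, hL₀⟩ := exists_L0 hα (4 * d * 10 ^ 4 * zeta2 ^ 2 * Real.log (4 * d))
    (4 * d) hC (by linarith)
  refine ⟨L₀, fun L hL k₁ k₂ hLk₁ hk => ?_⟩
  have hL3 : (3:ℝ) ≤ L := hL₀3.trans hL
  have hk₁3 : 3 ≤ k₁ := by exact_mod_cast (by linarith : (3:ℝ) ≤ (k₁:ℝ))
  have hk₂4 : 4 ≤ k₂ := by omega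
  have hk₂4' : (4:ℝ) ≤ (k₂:ℝ) := by exact_mod_cast hk₂4
  have hlogk₂ : (1:ℝ) ≤ Real.log k₂ := by
    rw [Real.le_log_iff_exp_le (by linarith)]
    calc Real.exp 1 ≤ 2.7182818286 := Real.exp_one_lt_d9.le
      _ ≤ (k₂:ℝ) := by linarith
  obtain ⟨X, hXdef⟩ : ∃ X : ℝ, X = 10 * Real.log k₂ := ⟨_, rfl⟩
  have hX1 : (1:ℝ) ≤ X := by rw [hXdef]; linarith
  have hX0 : (0:ℝ) < X := by linarith
  obtain ⟨t, htdef⟩ : ∃ t : ℝ, t = L / (X ^ 2 * zeta2) := ⟨_, rfl⟩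
  have ht0 : 0 < t := by rw [htdef]; positivity
  obtain ⟨E, hEdef⟩ : ∃ E : ℝ, E = L ^ 2 * (k₁:ℝ) ^ (2 * α) / (4 * d * X ^ 4 * zeta2 ^ 2) :=
    ⟨_, rfl⟩
  have hE0 : 0 < E := by
    rw [hEdef]
    have := Real.rpow_pos_of_pos (show (0:ℝ) < (k₁:ℝ) by linarith) (2 * α)
    positivity
  -- the subset step
  obtain ⟨A, hAdef⟩ : ∃ A : ℕ → Set M.Ω, A = fun i => {ω | t ≤ ‖M.D i ω‖} := ⟨_, rfl⟩
  have hsub : {ω | ∃ i : ℕ, k₁ ≤ i ∧ i ≤ k₂ ∧ ∃ ℓ : ℕ, 1 ≤ ℓ ∧ (ℓ : ℝ) ≤ 10 * Real.log i ∧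
      M.lvl i ω = ℓ ∧ L / ((ℓ : ℝ) ^ 2 * zeta2) ≤ ‖M.D i ω‖}
      ⊆ ⋃ i ∈ Finset.Icc k₁ k₂, A i := by
    rintro ω ⟨i, hi1, hi2, ℓ, hℓ1, hℓ2, _, hnorm⟩
    refine Set.mem_biUnion (Finset.mem_Icc.2 ⟨hi1, hi2⟩) ?_
    rw [hAdef]
    have hℓX : (ℓ:ℝ) ≤ X := by
      rw [hXdef]
      refine hℓ2.trans ?_
      have : Real.log i ≤ Real.log k₂ :=
        Real.log_le_log (by exact_mod_cast (by omega : 0 < i)) (by exact_mod_cast hi2)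
      linarith
    have hℓ0 : (0:ℝ) < (ℓ:ℝ) := by exact_mod_cast hℓ1
    have hsq : (ℓ:ℝ) ^ 2 * zeta2 ≤ X ^ 2 * zeta2 := by
      have : (ℓ:ℝ) ^ 2 ≤ X ^ 2 := by nlinarith
      nlinarith
    have ht_le : t ≤ L / ((ℓ:ℝ) ^ 2 * zeta2) := by
      rw [htdef]
      apply div_le_div_of_nonneg_left (by linarith) (by positivity) hsq
    exact Set.mem_setOf_eq ▸ ht_le.trans hnorm
  -- per-index bound
  obtain ⟨c₀, hc₀def⟩ : ∃ c₀ : ℝ,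
      c₀ = (d:ℝ) * (2 * Real.exp (-(t ^ 2 * (k₁:ℝ) ^ (2 * α)) / (2 * d))) := ⟨_, rfl⟩
  have hper : ∀ i ∈ Finset.Icc k₁ k₂, M.μ (A i) ≤ ENNReal.ofReal c₀ := by
    intro i hi
    rw [Finset.mem_Icc] at hi
    have h2i : 2 ≤ i := by omega
    have hik : (k₁:ℝ) ≤ (i:ℝ) := by exact_mod_cast hi.1
    rw [hAdef]
    refine (norm_tail (by omega) M i h2i ht0.le).trans (ENNReal.ofReal_le_ofReal ?_)
    rw [hc₀def]
    gcongr
  -- key identity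
  have hkey : -(t ^ 2 * (k₁:ℝ) ^ (2 * α)) / (2 * d) = -(2 * E) := by
    rw [htdef, hEdef]
    field_simp
    ring
  have hc₀ : c₀ = 2 * d * Real.exp (-(2 * E)) := by rw [hc₀def, hkey]; ring
  -- counting
  have hcard : ((Finset.Icc k₁ k₂).card : ℝ) = (k₂:ℝ) - k₁ + 1 := by
    rw [Nat.card_Icc, Nat.cast_sub (by omega)]
    push_cast
    ring
  have hsum : M.μ {ω | ∃ i : ℕ, k₁ ≤ i ∧ i ≤ k₂ ∧ ∃ ℓ : ℕ, 1 ≤ ℓ ∧ (ℓ : ℝ) ≤ 10 * Real.log i ∧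
      M.lvl i ω = ℓ ∧ L / ((ℓ : ℝ) ^ 2 * zeta2) ≤ ‖M.D i ω‖}
      ≤ ENNReal.ofReal (((k₂:ℝ) - k₁ + 1) * c₀) := by
    calc M.μ _ ≤ M.μ (⋃ i ∈ Finset.Icc k₁ k₂, A i) := measure_mono hsub
      _ ≤ ∑ i ∈ Finset.Icc k₁ k₂, M.μ (A i) := measure_biUnion_finset_le _ _
      _ ≤ ∑ _i ∈ Finset.Icc k₁ k₂, ENNReal.ofReal c₀ := Finset.sum_le_sum hper
      _ = ((Finset.Icc k₁ k₂).card : ℝ≥0∞) * ENNReal.ofReal c₀ := by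
          rw [Finset.sum_const, nsmul_eq_mul]
      _ = ENNReal.ofReal (((Finset.Icc k₁ k₂).card : ℝ) * c₀) := by
          rw [ENNReal.ofReal_mul (show (0:ℝ) ≤ ((Finset.Icc k₁ k₂).card : ℝ) by positivity),
            ENNReal.ofReal_natCast]
      _ = ENNReal.ofReal (((k₂:ℝ) - k₁ + 1) * c₀) := by rw [hcard]
  have hr1 : (1:ℝ) ≤ (k₂:ℝ) - k₁ := by
    have : (k₁:ℝ) + 1 ≤ k₂ := by exact_mod_cast (by omega : k₁ + 1 ≤ k₂)
    linarith
  -- the exponent in the goal is -E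
  have hgoalexp : -(L ^ 2 * (k₁ : ℝ) ^ (2 * α)) / (4 * d * (10 * Real.log k₂) ^ 4 * zeta2 ^ 2)
      = -E := by
    rw [hEdef, hXdef, neg_div]
  rw [hgoalexp]
  by_cases hE : Real.log (4 * d) ≤ E
  · -- main case
    refine hsum.trans (ENNReal.ofReal_le_ofReal ?_)
    obtain ⟨q, hqdef⟩ : ∃ q : ℝ, q = Real.exp (-E) := ⟨_, rfl⟩
    have hq0 : 0 < q := hqdef ▸ Real.exp_pos _
    have hqd : 4 * d * q ≤ 1 := by
      have : q ≤ (4 * (d:ℝ))⁻¹ := by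
        rw [hqdef, ← Real.exp_log (show (0:ℝ) < (4 * (d:ℝ))⁻¹ by positivity), Real.exp_le_exp,
          Real.log_inv]
        linarith
      have h2 : 4 * (d:ℝ) * q ≤ 4 * (d:ℝ) * (4 * (d:ℝ))⁻¹ :=
        mul_le_mul_of_nonneg_left this (by positivity)
      rwa [mul_inv_cancel₀ (show (4 * (d:ℝ)) ≠ 0 by positivity)] at h2
    have hqq : Real.exp (-(2 * E)) = q * q := by
      rw [hqdef, ← Real.exp_add]; ring_nf
    rw [hc₀, hqq, ← hqdef]
    have hmain : ((k₂:ℝ) - k₁ + 1) * (2 * d * (q * q)) ≤ ((k₂:ℝ) - k₁) * q := by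
      nlinarith [mul_le_mul_of_nonneg_left hqd hq0.le, hq0.le, hr1]
    have hrpow : (0:ℝ) ≤ (k₁:ℝ) ^ (-(3:ℝ)) := Real.rpow_nonneg (by positivity) _
    linarith
  · -- trivial case: RHS ≥ 1
    push_neg at hE
    have hbig : 4 * d ≤ k₂ - k₁ := by
      by_contra hsmall
      push_neg at hsmall
      have hk₂le : (k₂:ℝ) ≤ (k₁:ℝ) + 4 * d := by
        have : k₂ ≤ k₁ + 4 * d := by omega
        exact_mod_cast this
      -- then E ≥ log (4d), contradiction
      have hlogle : Real.log k₂ ≤ Real.log ((k₁:ℝ) + 4 * d) :=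
        Real.log_le_log (by linarith) hk₂le
      have hlogk₁ : (0:ℝ) ≤ Real.log ((k₁:ℝ) + 4 * d) := by linarith
      have hmain := hL₀ (k₁:ℝ) (hL.trans hLk₁)
      have hL2 : (1:ℝ) ≤ L ^ 2 := by nlinarith
      have hEge : Real.log (4 * d) ≤ E := by
        rw [hEdef, le_div_iff₀ (by positivity)]
        have h1 : Real.log (4 * (d:ℝ)) * (4 * d * X ^ 4 * zeta2 ^ 2)
            = 4 * d * 10 ^ 4 * zeta2 ^ 2 * Real.log (4 * d) * Real.log k₂ ^ 4 := by
          rw [hXdef]; ring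
        have h2 : Real.log (k₂:ℝ) ^ 4 ≤ Real.log ((k₁:ℝ) + 4 * d) ^ 4 := by
          apply pow_le_pow_left₀ (by linarith) hlogle
        have h3 : (k₁:ℝ) ^ (2 * α) ≤ L ^ 2 * (k₁:ℝ) ^ (2 * α) := by
          nlinarith [Real.rpow_pos_of_pos (show (0:ℝ) < (k₁:ℝ) by linarith) (2 * α)]
        calc Real.log (4 * (d:ℝ)) * (4 * d * X ^ 4 * zeta2 ^ 2)
            = 4 * d * 10 ^ 4 * zeta2 ^ 2 * Real.log (4 * d) * Real.log k₂ ^ 4 := h1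
          _ ≤ 4 * d * 10 ^ 4 * zeta2 ^ 2 * Real.log (4 * d) * Real.log ((k₁:ℝ) + 4 * d) ^ 4 := by
              nlinarith
          _ ≤ (k₁:ℝ) ^ (2 * α) := hmain
          _ ≤ L ^ 2 * (k₁:ℝ) ^ (2 * α) := h3
      linarith
    have hone : (1:ℝ) ≤ ((k₂:ℝ) - k₁) * Real.exp (-E) := by
      have hbig' : (4 * (d:ℝ)) ≤ (k₂:ℝ) - k₁ := by
        have h := Nat.cast_sub (le_of_lt hk) (R := ℝ)
        have : ((4 * d : ℕ):ℝ) ≤ ((k₂ - k₁ : ℕ):ℝ) := by exact_mod_cast hbig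
        rw [h] at this
        push_cast at this
        linarith
      have hexpE : (4 * (d:ℝ))⁻¹ < Real.exp (-E) := by
        rw [← Real.exp_log (show (0:ℝ) < (4 * (d:ℝ))⁻¹ by positivity), Real.exp_lt_exp,
          Real.log_inv]
        linarith
      calc (1:ℝ) = (4 * d) * (4 * (d:ℝ))⁻¹ := by field_simp
        _ ≤ ((k₂:ℝ) - k₁) * Real.exp (-E) := by
            apply mul_le_mul hbig' hexpE.le (by positivity) (by linarith)
    calc M.μ _ ≤ 1 := prob_le_one
      _ ≤ ENNReal.ofReal (((k₂:ℝ) - k₁) * Real.exp (-E) + (k₁:ℝ) ^ (-(3:ℝ))) := by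
          apply ENNReal.one_le_ofReal.2
          have : (0:ℝ) ≤ (k₁:ℝ) ^ (-(3:ℝ)) := Real.rpow_nonneg (by positivity) _
          linarith

end Helpers
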